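/- Let g be even, k = g/2, and n = g + k. Let U_{n,g} be the unicyclic graph obtained from a cycle on g vertices {1,…,g} by attaching a path on n - g vertices to vertex g. Then the largest eigenvalue of B(U_{n,g}) = D + A satisfies μ(U_{n,g}) ≥ 4.5. -/

import Mathlib

open Matrix

/-- The unicyclic graph `U_{n,g}` on vertices `0, …, n-1` (vertex `i` here is
vertex `i+1` of the paper): a cycle on `0, …, g-1` together with a pendant path
`g-1, g, …, n-1` attached at the cycle vertex `g-1`. -/
def Ung (n g : ℕ) : SimpleGraph (Fin n) :=
  SimpleGraph.fromRel (fun a b => b.val = a.val + 1 ∨ (a.val = 0 ∧ b.val = g - 1))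

instance (n g : ℕ) : DecidableRel (Ung n g).Adj := fun a b =>
  decidable_of_iff _ (SimpleGraph.fromRel_adj _ a b).symm

open Finset

/-- Rayleigh quotient bound: for a real symmetric matrix, any quadratic form value is at
most the largest spectral value times the squared norm. -/
lemma rayleigh_le {N : ℕ} (M : Matrix (Fin N) (Fin N) ℝ) (hM : M.IsHermitian) {mu : ℝ}
    (hmu : ∀ a ∈ spectrum ℝ M, a ≤ mu) (x : Fin N → ℝ) :
    x ⬝ᵥ (M *ᵥ x) ≤ mu * (x ⬝ᵥ x) := by
  set U : Matrix (Fin N) (Fin N) ℝ := (hM.eigenvectorUnitary : Matrix (Fin N) (Fin N) ℝ) with hU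
  have hUU : U * star U = 1 := (Matrix.mem_unitaryGroup_iff).mp hM.eigenvectorUnitary.2
  set y : Fin N → ℝ := star U *ᵥ x with hy
  have hxy : x ᵥ* U = y := by
    rw [hy, hU, star_eq_conjTranspose, conjTranspose_eq_transpose_of_trivial,
      mulVec_transpose]
  have h1 : x ⬝ᵥ (M *ᵥ x) = ∑ i, hM.eigenvalues i * (y i)^2 := by
    conv_lhs => rw [hM.spectral_theorem, Unitary.conjStarAlgAut_apply, ← hU]
    rw [← mulVec_mulVec, ← mulVec_mulVec, dotProduct_mulVec, hxy, ← hy]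
    simp only [dotProduct, mulVec_diagonal, Function.comp_apply, RCLike.ofReal_real_eq_id, id_eq]
    exact Finset.sum_congr rfl fun i _ => by ring
  have h2 : x ⬝ᵥ x = ∑ i, (y i)^2 := by
    have : x ⬝ᵥ x = x ⬝ᵥ ((U * star U) *ᵥ x) := by rw [hUU, one_mulVec]
    rw [this, ← mulVec_mulVec, dotProduct_mulVec, hxy, ← hy]
    simp [dotProduct, sq]
  rw [h1, h2, Finset.mul_sum]
  apply Finset.sum_le_sum
  intro i _
  have := hmu _ (hM.eigenvalues_mem_spectrum_real i)
  nlinarith [sq_nonneg (y i)]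

/-- The quadratic form of the signless Laplacian is the sum of `(x i + x j)^2` over edges. -/
lemma quad_form {N : ℕ} (G : SimpleGraph (Fin N)) [DecidableRel G.Adj] (x : Fin N → ℝ) :
    x ⬝ᵥ ((G.degMatrix ℝ + G.adjMatrix ℝ) *ᵥ x) =
      (∑ i, ∑ j, if G.Adj i j then (x i + x j)^2 else 0) / 2 := by
  simp_rw [add_mulVec, dotProduct_add, SimpleGraph.dotProduct_mulVec_degMatrix,
    SimpleGraph.dotProduct_mulVec_adjMatrix, SimpleGraph.degree_eq_sum_if_adj,
    sum_mul, ite_mul, one_mul, zero_mul, ← sum_add_distrib, ite_add_ite, add_zero]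
  rw [← add_self_div_two (∑ i : Fin N, ∑ j : Fin N, _)]
  conv_lhs => enter [1, 2, 2, i, 2, j]; rw [if_congr (G.adj_comm i j) rfl rfl]
  conv_lhs => enter [1, 2]; rw [Finset.sum_comm]
  simp_rw [← sum_add_distrib, ite_add_ite]
  congr 2 with i
  congr 2 with j
  ring_nf

/-- The double sum over the adjacency of `Ung n g` reduces to a sum over its edges. -/
lemma sum_adj {n g : ℕ} (hg : 3 ≤ g) (hgn : g ≤ n) (X : ℕ → ℝ) :
    ∑ i : Fin n, ∑ j : Fin n, (if (Ung n g).Adj i j then (X i.val + X j.val)^2 else 0)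
    = 2 * ((∑ i ∈ range (n-1), (X i + X (i+1))^2) + (X 0 + X (g-1))^2) := by
  have key : ∀ i j : Fin n, (if (Ung n g).Adj i j then (X i.val + X j.val)^2 else 0) =
      (if (j:ℕ) = (i:ℕ)+1 then (X i.val + X j.val)^2 else 0)
      + (if (i:ℕ) = (j:ℕ)+1 then (X i.val + X j.val)^2 else 0)
      + (if (i:ℕ) = 0 ∧ (j:ℕ) = g-1 then (X i.val + X j.val)^2 else 0)
      + (if (j:ℕ) = 0 ∧ (i:ℕ) = g-1 then (X i.val + X j.val)^2 else 0) := by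
    intro i j
    simp only [Ung, SimpleGraph.fromRel_adj, ne_eq, Fin.ext_iff]
    split_ifs <;> first | ring1 | (exfalso; omega)
  simp_rw [key, sum_add_distrib]
  -- Sum 1
  have s1 : ∑ i : Fin n, ∑ j : Fin n, (if (j:ℕ) = (i:ℕ)+1 then (X i.val + X j.val)^2 else 0)
      = ∑ i ∈ range (n-1), (X i + X (i+1))^2 := by
    have inner : ∀ a : ℕ, (∑ j : Fin n, (if (j:ℕ) = a+1 then (X a + X j.val)^2 else 0))
        = (if a+1 < n then (X a + X (a+1))^2 else 0) := by
      intro a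
      rw [Fin.sum_univ_eq_sum_range (fun b => if b = a+1 then (X a + X b)^2 else 0) n,
        Finset.sum_ite_eq' (range n) (a+1) (fun b => (X a + X b)^2)]
      simp only [mem_range]
    calc ∑ i : Fin n, ∑ j : Fin n, (if (j:ℕ) = (i:ℕ)+1 then (X i.val + X j.val)^2 else 0)
        = ∑ a ∈ range n, (if a+1 < n then (X a + X (a+1))^2 else 0) := by
          rw [← Fin.sum_univ_eq_sum_range
            (fun a => if a+1 < n then (X a + X (a+1))^2 else 0) n]
          exact Finset.sum_congr rfl fun i _ => inner i
      _ = ∑ i ∈ range (n-1), (X i + X (i+1))^2 := by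
          obtain ⟨p, rfl⟩ : ∃ p, n = p + 1 := ⟨n-1, by omega⟩
          rw [Finset.sum_range_succ, if_neg (by omega)]
          simp only [Nat.add_sub_cancel, add_zero]
          exact Finset.sum_congr rfl fun a ha => if_pos (by simpa using mem_range.mp ha)
  have s2 : ∑ i : Fin n, ∑ j : Fin n, (if (i:ℕ) = (j:ℕ)+1 then (X i.val + X j.val)^2 else 0)
      = ∑ i ∈ range (n-1), (X i + X (i+1))^2 := by
    rw [Finset.sum_comm, ← s1]
    exact Finset.sum_congr rfl fun j _ => Finset.sum_congr rfl fun i _ => by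
      rw [add_comm (X j.val) (X i.val)]
  have s3 : ∑ i : Fin n, ∑ j : Fin n, (if (i:ℕ) = 0 ∧ (j:ℕ) = g-1 then (X i.val + X j.val)^2 else 0)
      = (X 0 + X (g-1))^2 := by
    have inner : ∀ a : ℕ, a < n → (∑ j : Fin n, (if a = 0 ∧ (j:ℕ) = g-1 then (X a + X j.val)^2 else 0))
        = (if a = 0 then (X a + X (g-1))^2 else 0) := by
      intro a _
      by_cases ha : a = 0
      · subst ha
        simp only [true_and, if_pos rfl]
        rw [Fin.sum_univ_eq_sum_range (fun b => if b = g-1 then (X 0 + X b)^2 else 0) n,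
          Finset.sum_ite_eq' (range n) (g-1) (fun b => (X 0 + X b)^2)]
        simp only [mem_range]
        rw [if_pos (by omega : g - 1 < n)]
        simp
      · simp [ha]
    calc ∑ i : Fin n, ∑ j : Fin n, (if (i:ℕ) = 0 ∧ (j:ℕ) = g-1 then (X i.val + X j.val)^2 else 0)
        = ∑ a ∈ range n, (if a = 0 then (X a + X (g-1))^2 else 0) := by
          rw [← Fin.sum_univ_eq_sum_range (fun a => if a = 0 then (X a + X (g-1))^2 else 0) n]
          exact Finset.sum_congr rfl fun i _ => inner i i.isLt
      _ = (X 0 + X (g-1))^2 := by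
          rw [Finset.sum_ite_eq' (range n) 0 (fun a => (X a + X (g-1))^2)]
          simp only [mem_range]
          rw [if_pos (by omega : 0 < n)]
  have s4 : ∑ i : Fin n, ∑ j : Fin n, (if (j:ℕ) = 0 ∧ (i:ℕ) = g-1 then (X i.val + X j.val)^2 else 0)
      = (X 0 + X (g-1))^2 := by
    rw [Finset.sum_comm, ← s3]
    exact Finset.sum_congr rfl fun j _ => Finset.sum_congr rfl fun i _ => by
      rw [add_comm (X j.val) (X i.val)]
  rw [s1, s2, s3, s4]; ring

/-- The witness vector: value `2^(k - d)` at a vertex at distance `d` from the hub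
vertex `2m+3` (here `k = m+2`). -/
noncomputable def Xv (m : ℕ) : ℕ → ℝ := fun i =>
  if i < m+2 then 2^(m+1-i) else if i < 2*m+4 then 2^(i-(m+1)) else 2^(3*m+5-i)

lemma Xv_low {m i : ℕ} (h : i < m+2) : Xv m i = 2^(m+1-i) := by
  simp only [Xv]; rw [if_pos h]

lemma Xv_mid {m i : ℕ} (h1 : m+2 ≤ i) (h2 : i < 2*m+4) : Xv m i = 2^(i-(m+1)) := by
  simp only [Xv]; rw [if_neg (by omega), if_pos h2]

lemma Xv_high {m i : ℕ} (h1 : 2*m+4 ≤ i) : Xv m i = 2^(3*m+5-i) := by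
  simp only [Xv]; rw [if_neg (by omega), if_neg (by omega)]

lemma four_pow (t : ℕ) : (4:ℝ)^t = (2^t)^2 := by
  rw [show (4:ℝ) = 2^2 by norm_num, ← pow_mul, ← pow_mul, Nat.mul_comm]

lemma geom3 (N : ℕ) : 3 * ∑ j ∈ range N, (4:ℝ)^j = 4^N - 1 := by
  have := geom_sum_mul (4:ℝ) N
  nlinarith [this]

lemma edge_sum (m : ℕ) :
    (∑ i ∈ range (3*m+5), (Xv m i + Xv m (i+1))^2) + (Xv m 0 + Xv m (2*m+3))^2
    = 9 * 4^(m+2) - 9 := by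
  set f : ℕ → ℝ := fun i => (Xv m i + Xv m (i+1))^2 with hf
  have split : ∑ i ∈ range (3*m+5), f i =
      ((((∑ i ∈ Ico 0 (m+1), f i) + ∑ i ∈ Ico (m+1) (m+2), f i)
        + ∑ i ∈ Ico (m+2) (2*m+3), f i) + ∑ i ∈ Ico (2*m+3) (2*m+4), f i)
        + ∑ i ∈ Ico (2*m+4) (3*m+5), f i := by
    rw [range_eq_Ico,
      ← Finset.sum_Ico_consecutive f (by omega : 0 ≤ 2*m+4) (by omega : 2*m+4 ≤ 3*m+5),
      ← Finset.sum_Ico_consecutive f (by omega : 0 ≤ 2*m+3) (by omega : 2*m+3 ≤ 2*m+4),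
      ← Finset.sum_Ico_consecutive f (by omega : 0 ≤ m+2) (by omega : m+2 ≤ 2*m+3),
      ← Finset.sum_Ico_consecutive f (by omega : 0 ≤ m+1) (by omega : m+1 ≤ m+2)]
  set G : ℝ := ∑ j ∈ range (m+1), (4:ℝ)^j with hG
  have p1 : ∑ i ∈ Ico 0 (m+1), f i = 9 * G := by
    rw [← range_eq_Ico]
    have : ∀ j ∈ range (m+1), f j = 9 * 4^(m-j) := by
      intro j hj
      have hj' := mem_range.mp hj
      simp only [hf]
      rw [Xv_low (by omega), Xv_low (by omega),
        show m+1-(j+1) = m-j by omega, show m+1-j = (m-j)+1 by omega,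
        pow_succ, four_pow]
      ring
    rw [Finset.sum_congr rfl this, hG, Finset.mul_sum,
      ← Finset.sum_range_reflect (fun j => (9:ℝ) * 4^j) (m+1)]
    exact Finset.sum_congr rfl fun j hj => by
      rw [show m+1-1-j = m-j by omega]
  have p2 : ∑ i ∈ Ico (m+1) (m+2), f i = 9 := by
    rw [Finset.sum_Ico_eq_sum_range, show m+2-(m+1) = 1 by omega, Finset.sum_range_one]
    simp only [hf]
    rw [Xv_low (by omega), Xv_mid (by omega) (by omega),
      show m+1-(m+1+0) = 0 by omega, show m+1+0+1-(m+1) = 1 by omega]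
    norm_num
  have p3 : ∑ i ∈ Ico (m+2) (2*m+3), f i = 36 * G := by
    rw [Finset.sum_Ico_eq_sum_range, show 2*m+3-(m+2) = m+1 by omega]
    have : ∀ j ∈ range (m+1), f (m+2+j) = 36 * 4^j := by
      intro j hj
      have hj' := mem_range.mp hj
      simp only [hf]
      rw [Xv_mid (by omega) (by omega), Xv_mid (by omega) (by omega),
        show m+2+j-(m+1) = j+1 by omega, show m+2+j+1-(m+1) = j+2 by omega,
        pow_succ, pow_succ, pow_succ, four_pow]
      ring
    rw [Finset.sum_congr rfl this, hG, Finset.mul_sum]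
  have p4 : ∑ i ∈ Ico (2*m+3) (2*m+4), f i = 9 * 4^(m+1) := by
    rw [Finset.sum_Ico_eq_sum_range, show 2*m+4-(2*m+3) = 1 by omega, Finset.sum_range_one]
    simp only [hf]
    rw [Xv_mid (by omega) (by omega), Xv_high (by omega),
      show 2*m+3+0-(m+1) = (m+1)+1 by omega, show 3*m+5-(2*m+3+0+1) = m+1 by omega,
      pow_succ, four_pow]
    ring
  have p5 : ∑ i ∈ Ico (2*m+4) (3*m+5), f i = 9 * G := by
    rw [Finset.sum_Ico_eq_sum_range, show 3*m+5-(2*m+4) = m+1 by omega]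
    have : ∀ j ∈ range (m+1), f (2*m+4+j) = 9 * 4^(m-j) := by
      intro j hj
      have hj' := mem_range.mp hj
      simp only [hf]
      rw [Xv_high (by omega), Xv_high (by omega),
        show 3*m+5-(2*m+4+j) = (m-j)+1 by omega, show 3*m+5-(2*m+4+j+1) = m-j by omega,
        pow_succ, four_pow]
      ring
    rw [Finset.sum_congr rfl this, hG, Finset.mul_sum,
      ← Finset.sum_range_reflect (fun j => (9:ℝ) * 4^j) (m+1)]
    exact Finset.sum_congr rfl fun j hj => by
      rw [show m+1-1-j = m-j by omega]
  have pextra : (Xv m 0 + Xv m (2*m+3))^2 = 9 * 4^(m+1) := by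
    rw [Xv_low (by omega), Xv_mid (by omega) (by omega),
      show m+1-0 = m+1 by omega, show 2*m+3-(m+1) = (m+1)+1 by omega,
      pow_succ, four_pow]
    ring
  rw [split, p1, p2, p3, p4, p5, pextra]
  have hGval := geom3 (m+1)
  rw [← hG] at hGval
  have h2 : (4:ℝ)^(m+2) = 4 * 4^(m+1) := by rw [pow_succ]; ring
  linarith

lemma norm_sum (m : ℕ) :
    ∑ i ∈ range (3*m+6), (Xv m i)^2 = 2 * (4^(m+2) - 1) := by
  set f : ℕ → ℝ := fun i => (Xv m i)^2 with hf
  have split : ∑ i ∈ range (3*m+6), f i =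
      ((∑ i ∈ Ico 0 (m+2), f i) + ∑ i ∈ Ico (m+2) (2*m+4), f i)
        + ∑ i ∈ Ico (2*m+4) (3*m+6), f i := by
    rw [range_eq_Ico,
      ← Finset.sum_Ico_consecutive f (by omega : 0 ≤ 2*m+4) (by omega : 2*m+4 ≤ 3*m+6),
      ← Finset.sum_Ico_consecutive f (by omega : 0 ≤ m+2) (by omega : m+2 ≤ 2*m+4)]
  set G : ℝ := ∑ j ∈ range (m+2), (4:ℝ)^j with hG
  have p1 : ∑ i ∈ Ico 0 (m+2), f i = G := by
    rw [← range_eq_Ico]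
    have : ∀ j ∈ range (m+2), f j = 4^(m+1-j) := by
      intro j hj
      have hj' := mem_range.mp hj
      simp only [hf]
      rw [Xv_low (by omega), four_pow]
    rw [Finset.sum_congr rfl this, hG,
      ← Finset.sum_range_reflect (fun j => (4:ℝ)^j) (m+2)]
    exact Finset.sum_congr rfl fun j hj => by
      rw [show m+2-1-j = m+1-j by omega]
  have p2 : ∑ i ∈ Ico (m+2) (2*m+4), f i = 4 * G := by
    rw [Finset.sum_Ico_eq_sum_range, show 2*m+4-(m+2) = m+2 by omega]
    have : ∀ j ∈ range (m+2), f (m+2+j) = 4 * 4^j := by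
      intro j hj
      have hj' := mem_range.mp hj
      simp only [hf]
      rw [Xv_mid (by omega) (by omega), show m+2+j-(m+1) = j+1 by omega,
        pow_succ, four_pow]
      ring
    rw [Finset.sum_congr rfl this, hG, Finset.mul_sum]
  have p3 : ∑ i ∈ Ico (2*m+4) (3*m+6), f i = G := by
    rw [Finset.sum_Ico_eq_sum_range, show 3*m+6-(2*m+4) = m+2 by omega]
    have : ∀ j ∈ range (m+2), f (2*m+4+j) = 4^(m+1-j) := by
      intro j hj
      have hj' := mem_range.mp hj
      simp only [hf]
      rw [Xv_high (by omega), show 3*m+5-(2*m+4+j) = m+1-j by omega, four_pow]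
    rw [Finset.sum_congr rfl this, hG,
      ← Finset.sum_range_reflect (fun j => (4:ℝ)^j) (m+2)]
    exact Finset.sum_congr rfl fun j hj => by
      rw [show m+2-1-j = m+1-j by omega]
  rw [split, p1, p2, p3]
  have hGval := geom3 (m+2)
  rw [← hG] at hGval
  linarith

theorem stmt_10 (g k n : ℕ) (hg : 3 ≤ g) (hgk : g = 2 * k) (hn : n = g + k)
    (mu : ℝ)
    (hmu : IsGreatest
      (spectrum ℝ ((Ung n g).degMatrix ℝ + (Ung n g).adjMatrix ℝ)) mu) :
    mu ≥ 4.5 := by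
  subst hgk
  subst hn
  obtain ⟨m, rfl⟩ : ∃ m, k = m + 2 := ⟨k-2, by omega⟩
  set n : ℕ := 2*(m+2) + (m+2) with hn
  set G : SimpleGraph (Fin n) := Ung n (2*(m+2)) with hGg
  set M : Matrix (Fin n) (Fin n) ℝ := G.degMatrix ℝ + G.adjMatrix ℝ with hM
  have hsym : M.IsHermitian := by
    rw [hM, Matrix.IsHermitian, Matrix.conjTranspose_eq_transpose_of_trivial,
      Matrix.transpose_add, (SimpleGraph.isSymm_degMatrix (G := G) (R := ℝ)), (SimpleGraph.isSymm_adjMatrix (G := G) (α := ℝ))]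
  set x : Fin n → ℝ := fun v => Xv m v.val with hx
  have hray := rayleigh_le M hsym (fun a ha => hmu.2 ha) x
  have hq : x ⬝ᵥ (M *ᵥ x) = 9 * 4^(m+2) - 9 := by
    rw [hM, quad_form G x]
    have : (∑ i, ∑ j, if G.Adj i j then (x i + x j)^2 else 0)
        = ∑ i : Fin n, ∑ j : Fin n, (if (Ung n (2*(m+2))).Adj i j
            then (Xv m i.val + Xv m j.val)^2 else 0) := rfl
    rw [this, sum_adj (by omega) (by omega) (Xv m),
      show n - 1 = 3*m+5 by omega, show 2*(m+2) - 1 = 2*m+3 by omega, edge_sum m]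
    ring
  have hnorm : x ⬝ᵥ x = 2 * (4^(m+2) - 1) := by
    have : x ⬝ᵥ x = ∑ i : Fin n, Xv m i.val * Xv m i.val := rfl
    rw [this]
    rw [Fin.sum_univ_eq_sum_range (fun i => Xv m i * Xv m i) n, show n = 3*m+6 by omega,
      ← norm_sum m]
    exact Finset.sum_congr rfl fun i _ => (sq (Xv m i)).symm ▸ by ring
  rw [hq, hnorm] at hray
  have hp : (1:ℝ) < 4^(m+2) := by
    apply one_lt_pow₀ (by norm_num) (by omega)
  norm_num only [ge_iff_le]
  nlinarith [hray, hp]
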